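/- At every point (z,σ) ∈ ℝ^N ∖ {(0,0)} one has the anisotropic eikonal identity Φ(∇_z ρ(z,σ))² + (Φ⁰(z)^{2α}/4) Ψ(∇_σ ρ(z,σ))² = (Φ⁰(z)/ρ(z,σ))^{2α}. -/

import Mathlib

open Real MeasureTheory
open scoped RealInnerProductSpace

noncomputable section

abbrev Euc (n : ℕ) := EuclideanSpace ℝ (Fin n)

/-- A Minkowski norm on `ℝⁿ`: nonnegative, absolutely homogeneous, with `N²` of class `C²`
away from the origin and strictly convex. -/
def IsMinkowskiNorm {n : ℕ} (N : Euc n → ℝ) : Prop :=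
  (∀ x, 0 ≤ N x) ∧ (∀ (l : ℝ) (x : Euc n), N (l • x) = |l| * N x) ∧
  ContDiffOn ℝ 2 (fun x => (N x) ^ 2) {(0 : Euc n)}ᶜ ∧
  StrictConvexOn ℝ Set.univ (fun x => (N x) ^ 2)

/-- The Legendre transform (dual norm) `N⁰(x) = sup { ⟨x,ξ⟩ : N(ξ) = 1 }`. -/
def dualNorm {n : ℕ} (N : Euc n → ℝ) (x : Euc n) : ℝ :=
  sSup ((fun ξ => ⟪x, ξ⟫) '' {ξ | N ξ = 1})

variable {m k : ℕ}

/-- The dual anisotropic Minkowski gauge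
`ρ(z,σ) = (Φ⁰(z)^{2(α+1)} + 4(α+1)²Ψ⁰(σ)²)^{1/(2(α+1))}`. -/
def rho (α : ℝ) (Φ : Euc m → ℝ) (Ψ : Euc k → ℝ) (x : Euc m × Euc k) : ℝ :=
  (dualNorm Φ x.1 ^ (2 * (α + 1)) + 4 * (α + 1) ^ 2 * dualNorm Ψ x.2 ^ 2) ^ (1 / (2 * (α + 1)))

/-- Gradient in the `z` variables. -/
def gradZ (u : Euc m × Euc k → ℝ) (x : Euc m × Euc k) : Euc m :=
  gradient (fun z => u (z, x.2)) x.1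

/-- Gradient in the `σ` variables. -/
def gradS (u : Euc m × Euc k → ℝ) (x : Euc m × Euc k) : Euc k :=
  gradient (fun σ => u (x.1, σ)) x.2

/-- Divergence in the `z` variables. -/
def divZ (V : Euc m × Euc k → Euc m) (x : Euc m × Euc k) : ℝ :=
  ∑ i, fderiv ℝ (fun z => V (z, x.2) i) x.1 (EuclideanSpace.single i 1)

/-- Divergence in the `σ` variables. -/
def divS (V : Euc m × Euc k → Euc k) (x : Euc m × Euc k) : ℝ :=
  ∑ i, fderiv ℝ (fun σ => V (x.1, σ) i) x.2 (EuclideanSpace.single i 1)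

/-- The Finsler Laplacian in the `z` variables, `Δ_Φ(u) = div_z(Φ(∇_z u) ∇Φ(∇_z u))`. -/
def finslerLapZ (Φ : Euc m → ℝ) (u : Euc m × Euc k → ℝ) (x : Euc m × Euc k) : ℝ :=
  divZ (fun y => Φ (gradZ u y) • gradient Φ (gradZ u y)) x

/-- The Finsler Laplacian in the `σ` variables, `Δ_Ψ(u) = div_σ(Ψ(∇_σ u) ∇Ψ(∇_σ u))`. -/
def finslerLapS (Ψ : Euc k → ℝ) (u : Euc m × Euc k → ℝ) (x : Euc m × Euc k) : ℝ :=
  divS (fun y => Ψ (gradS u y) • gradient Ψ (gradS u y)) x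

/-- The operator `𝓛_{α,p}`. -/
def Lop (α p : ℝ) (Φ : Euc m → ℝ) (Ψ : Euc k → ℝ) (u : Euc m × Euc k → ℝ)
    (x : Euc m × Euc k) : ℝ :=
  divZ (fun y =>
      (Φ (gradZ u y) ^ 2 + dualNorm Φ y.1 ^ (2 * α) / 4 * Ψ (gradS u y) ^ 2) ^ ((p - 2) / 2) •
        (Φ (gradZ u y) • gradient Φ (gradZ u y))) x
  + divS (fun y =>
      (Φ (gradZ u y) ^ 2 + dualNorm Φ y.1 ^ (2 * α) / 4 * Ψ (gradS u y) ^ 2) ^ ((p - 2) / 2) •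
        ((dualNorm Φ y.1 ^ (2 * α) / 4 * Ψ (gradS u y)) • gradient Ψ (gradS u y))) x

/-- The operator `𝓛_{α,2}(u) = Δ_Φ(u) + (Φ⁰(z)^{2α}/4) Δ_Ψ(u)`. -/
def Lop2 (α : ℝ) (Φ : Euc m → ℝ) (Ψ : Euc k → ℝ) (u : Euc m × Euc k → ℝ)
    (x : Euc m × Euc k) : ℝ :=
  finslerLapZ Φ u x + dualNorm Φ x.1 ^ (2 * α) / 4 * finslerLapS Ψ u x

open Topology Filter Asymptotics

section A
variable {n : ℕ} {N : Euc n → ℝ}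

lemma mink_zero (h : IsMinkowskiNorm N) : N 0 = 0 := by
  have := h.2.1 0 0
  simpa using this

lemma mink_neg (h : IsMinkowskiNorm N) (x : Euc n) : N (-x) = N x := by
  have := h.2.1 (-1) x
  simpa using this

lemma mink_pos (h : IsMinkowskiNorm N) {x : Euc n} (hx : x ≠ 0) : 0 < N x := by
  have hsc := h.2.2.2
  have hne : x ≠ -x := by
    intro he
    apply hx
    have : x + x = 0 := by
      nth_rewrite 1 [he]; abel
    have h2 : (2 : ℝ) • x = 0 := by
      rw [two_smul]; exact this
    simpa using (smul_eq_zero.1 h2).resolve_left (by norm_num)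
  have := hsc.2 (Set.mem_univ x) (Set.mem_univ (-x)) hne (by norm_num : (0:ℝ) < 1/2)
    (by norm_num : (0:ℝ) < 1/2) (by norm_num)
  have hmid : (1/2 : ℝ) • x + (1/2 : ℝ) • (-x) = 0 := by
    rw [smul_neg]; abel
  simp only [hmid, mink_neg h, mink_zero h, smul_eq_mul] at this
  nlinarith [h.1 x]

lemma mink_continuousOn (h : IsMinkowskiNorm N) : ContinuousOn N {(0 : Euc n)}ᶜ := by
  have h2 : ContinuousOn (fun x => (N x)^2) {(0 : Euc n)}ᶜ := (h.2.2.1).continuousOn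
  have : ContinuousOn (fun x => Real.sqrt ((N x)^2)) {(0 : Euc n)}ᶜ :=
    Real.continuous_sqrt.comp_continuousOn h2
  convert this using 1
  funext x
  rw [Real.sqrt_sq (h.1 x)]

lemma mink_bounds (hn : 1 ≤ n) (h : IsMinkowskiNorm N) :
    ∃ c C : ℝ, 0 < c ∧ 0 < C ∧ ∀ x, c * ‖x‖ ≤ N x ∧ N x ≤ C * ‖x‖ := by
  have hsph : IsCompact (Metric.sphere (0 : Euc n) 1) := isCompact_sphere _ _
  have hsub : Metric.sphere (0 : Euc n) 1 ⊆ {(0 : Euc n)}ᶜ := by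
    intro v hv
    simp only [Metric.mem_sphere, dist_zero_right] at hv
    simp only [Set.mem_compl_iff, Set.mem_singleton_iff]
    intro h0; rw [h0] at hv; simp at hv
  have hcont : ContinuousOn N (Metric.sphere (0 : Euc n) 1) :=
    (mink_continuousOn h).mono hsub
  have hne : (Metric.sphere (0 : Euc n) 1).Nonempty := by
    refine ⟨EuclideanSpace.single ⟨0, hn⟩ (1:ℝ), ?_⟩
    simp [EuclideanSpace.norm_single]
  obtain ⟨v₀, hv₀, hmin⟩ := hsph.exists_isMinOn hne hcont
  obtain ⟨v₁, hv₁, hmax⟩ := hsph.exists_isMaxOn hne hcont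
  refine ⟨N v₀, N v₁ + 1, mink_pos h (hsub hv₀ ·), by nlinarith [h.1 v₁], fun x => ?_⟩
  rcases eq_or_ne x 0 with rfl | hx
  · simp [mink_zero h]
  · have hxn : ‖x‖ ≠ 0 := norm_ne_zero_iff.2 hx
    have hux : ‖x‖⁻¹ • x ∈ Metric.sphere (0 : Euc n) 1 := by
      simp [norm_smul, abs_of_pos (by positivity : (0:ℝ) < ‖x‖⁻¹), inv_mul_cancel₀ hxn]
    have hNx : N x = ‖x‖ * N (‖x‖⁻¹ • x) := by
      have := h.2.1 ‖x‖⁻¹ x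
      rw [this, abs_of_nonneg (by positivity)]
      field_simp
    constructor
    · rw [hNx, mul_comm (N v₀)]
      exact mul_le_mul_of_nonneg_left (hmin hux) (norm_nonneg x)
    · rw [hNx, mul_comm (N v₁ + 1)]
      have : N (‖x‖⁻¹ • x) ≤ N v₁ + 1 := le_trans (hmax hux) (by linarith)
      exact mul_le_mul_of_nonneg_left this (norm_nonneg x)

lemma mink_S_compact (hn : 1 ≤ n) (h : IsMinkowskiNorm N) :
    IsCompact {ξ | N ξ = 1} ∧ {ξ | N ξ = 1}.Nonempty := by
  obtain ⟨c, C, hc, hC, hb⟩ := mink_bounds hn h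
  constructor
  · set K := Metric.closedBall (0 : Euc n) (1/c) \ Metric.ball (0 : Euc n) (1/C) with hK
    have hKcl : IsClosed K :=
      Metric.isClosed_closedBall.sdiff Metric.isOpen_ball
    have hKcpt : IsCompact K :=
      (isCompact_closedBall _ _).of_isClosed_subset hKcl Set.diff_subset
    have hKne0 : K ⊆ {(0 : Euc n)}ᶜ := by
      intro v hv
      simp only [hK, Set.mem_diff, Metric.mem_closedBall, Metric.mem_ball,
        dist_zero_right, not_lt] at hv
      simp only [Set.mem_compl_iff, Set.mem_singleton_iff]
      intro h0
      rw [h0] at hv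
      simp only [norm_zero] at hv
      have := hv.2
      have : (0:ℝ) < 1/C := by positivity
      linarith
    have hsub : {ξ | N ξ = 1} ⊆ K := by
      intro ξ hξ
      simp only [Set.mem_setOf_eq] at hξ
      simp only [hK, Set.mem_diff, Metric.mem_closedBall, Metric.mem_ball,
        dist_zero_right, not_lt]
      have h1 := (hb ξ).1
      have h2 := (hb ξ).2
      rw [hξ] at h1 h2
      constructor
      · rw [le_div_iff₀ hc]
        nlinarith
      · rw [div_le_iff₀ hC]
        nlinarith
    have hScl : IsClosed {ξ | N ξ = 1} := by
      have : {ξ | N ξ = 1} = K ∩ N ⁻¹' {1} := by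
        ext ξ
        simp only [Set.mem_setOf_eq, Set.mem_inter_iff, Set.mem_preimage,
          Set.mem_singleton_iff]
        exact ⟨fun hh => ⟨hsub hh, hh⟩, fun hh => hh.2⟩
      rw [this]
      exact ContinuousOn.preimage_isClosed_of_isClosed
        ((mink_continuousOn h).mono hKne0) hKcl isClosed_singleton
    exact hKcpt.of_isClosed_subset hScl hsub
  · obtain ⟨v, hv⟩ : ∃ v : Euc n, v ≠ 0 := by
      refine ⟨EuclideanSpace.single ⟨0, hn⟩ (1:ℝ), ?_⟩
      intro h0
      have := congrArg (fun w => w ⟨0, hn⟩) h0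
      simp at this
    refine ⟨(N v)⁻¹ • v, ?_⟩
    simp only [Set.mem_setOf_eq]
    rw [h.2.1, abs_of_pos (inv_pos.2 (mink_pos h hv)),
      inv_mul_cancel₀ (ne_of_gt (mink_pos h hv))]

lemma dual_max (hn : 1 ≤ n) (h : IsMinkowskiNorm N) (y : Euc n) :
    ∃ ξ, N ξ = 1 ∧ ⟪y, ξ⟫ = dualNorm N y ∧ ∀ η, N η = 1 → ⟪y, η⟫ ≤ dualNorm N y := by
  obtain ⟨hcpt, hne⟩ := mink_S_compact hn h
  have hcont : ContinuousOn (fun ξ : Euc n => ⟪y, ξ⟫) {ξ | N ξ = 1} :=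
    (continuous_const.inner continuous_id).continuousOn
  obtain ⟨ξ, hξS, hmax⟩ := hcpt.exists_isMaxOn hne hcont
  have hgr : IsGreatest ((fun ξ => ⟪y, ξ⟫) '' {ξ | N ξ = 1}) ⟪y, ξ⟫ := by
    constructor
    · exact Set.mem_image_of_mem _ hξS
    · rintro r ⟨η, hη, rfl⟩
      exact hmax hη
  have hsup : dualNorm N y = ⟪y, ξ⟫ := by
    rw [dualNorm]; exact hgr.csSup_eq
  refine ⟨ξ, hξS, hsup.symm, ?_⟩
  intro η hη
  rw [hsup]
  exact hmax hη

lemma dualNorm_zero (hn : 1 ≤ n) (h : IsMinkowskiNorm N) : dualNorm N 0 = 0 := by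
  obtain ⟨ξ, _, hξ, _⟩ := dual_max hn h 0
  rw [← hξ, inner_zero_left]

lemma dualNorm_pos (hn : 1 ≤ n) (h : IsMinkowskiNorm N) {x : Euc n} (hx : x ≠ 0) :
    0 < dualNorm N x := by
  obtain ⟨_, _, _, hall⟩ := dual_max hn h x
  have hS : N ((N x)⁻¹ • x) = 1 := by
    rw [h.2.1, abs_of_pos (inv_pos.2 (mink_pos h hx)),
      inv_mul_cancel₀ (ne_of_gt (mink_pos h hx))]
  have hle := hall _ hS
  have : ⟪x, (N x)⁻¹ • x⟫ = (N x)⁻¹ * ‖x‖^2 := by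
    rw [real_inner_smul_right, real_inner_self_eq_norm_sq]
  rw [this] at hle
  have : 0 < (N x)⁻¹ * ‖x‖^2 := by
    have := mink_pos h hx
    have hxn : ‖x‖ ≠ 0 := norm_ne_zero_iff.2 hx
    positivity
  linarith

lemma dualNorm_nonneg (hn : 1 ≤ n) (h : IsMinkowskiNorm N) (x : Euc n) :
    0 ≤ dualNorm N x := by
  rcases eq_or_ne x 0 with rfl | hx
  · rw [dualNorm_zero hn h]
  · exact le_of_lt (dualNorm_pos hn h hx)

lemma dualNorm_le (hn : 1 ≤ n) (h : IsMinkowskiNorm N) :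
    ∃ R : ℝ, 0 < R ∧ (∀ ξ, N ξ = 1 → ‖ξ‖ ≤ R) ∧ ∀ x, dualNorm N x ≤ R * ‖x‖ := by
  obtain ⟨c, C, hc, hC, hb⟩ := mink_bounds hn h
  refine ⟨1/c, by positivity, fun ξ hξ => ?_, fun x => ?_⟩
  · have := (hb ξ).1
    rw [hξ] at this
    rw [le_div_iff₀ hc]; nlinarith
  · obtain ⟨ξ, hξS, hξ, _⟩ := dual_max hn h x
    rw [← hξ]
    calc ⟪x, ξ⟫ ≤ ‖x‖ * ‖ξ‖ := real_inner_le_norm x ξ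
      _ ≤ ‖x‖ * (1/c) := by
          have := (hb ξ).1
          rw [hξS] at this
          have h1 : ‖ξ‖ ≤ 1/c := by rw [le_div_iff₀ hc]; nlinarith
          exact mul_le_mul_of_nonneg_left h1 (norm_nonneg x)
      _ = 1/c * ‖x‖ := by ring

lemma dualNorm_lipschitz (hn : 1 ≤ n) (h : IsMinkowskiNorm N) {R : ℝ}
    (hR : ∀ ξ, N ξ = 1 → ‖ξ‖ ≤ R) (x y : Euc n) :
    dualNorm N y ≤ dualNorm N x + R * ‖y - x‖ := by
  obtain ⟨ξ, hξS, hξ, _⟩ := dual_max hn h y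
  obtain ⟨_, _, _, hallx⟩ := dual_max hn h x
  rw [← hξ]
  have : ⟪y, ξ⟫ = ⟪x, ξ⟫ + ⟪y - x, ξ⟫ := by
    rw [← inner_add_left]
    congr 1
    abel
  rw [this]
  have h1 : ⟪x, ξ⟫ ≤ dualNorm N x := hallx _ hξS
  have h2 : ⟪y - x, ξ⟫ ≤ R * ‖y - x‖ := by
    calc ⟪y - x, ξ⟫ ≤ ‖y - x‖ * ‖ξ‖ := real_inner_le_norm _ _
      _ ≤ ‖y - x‖ * R := mul_le_mul_of_nonneg_left (hR ξ hξS) (norm_nonneg _)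
      _ = R * ‖y - x‖ := by ring
  linarith

lemma dual_max_unique (hn : 1 ≤ n) (h : IsMinkowskiNorm N) {x : Euc n} (hx : x ≠ 0)
    {ξ₁ ξ₂ : Euc n} (h₁ : N ξ₁ = 1) (h₂ : N ξ₂ = 1)
    (hm₁ : ⟪x, ξ₁⟫ = dualNorm N x) (hm₂ : ⟪x, ξ₂⟫ = dualNorm N x) : ξ₁ = ξ₂ := by
  by_contra hne
  obtain ⟨_, _, _, hall⟩ := dual_max hn h x
  set M := dualNorm N x with hM
  have hMpos : 0 < M := dualNorm_pos hn h hx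
  set ξm := (1/2 : ℝ) • ξ₁ + (1/2 : ℝ) • ξ₂ with hξm
  have hstrict := h.2.2.2.2 (Set.mem_univ ξ₁) (Set.mem_univ ξ₂) hne
    (by norm_num : (0:ℝ) < 1/2) (by norm_num : (0:ℝ) < 1/2) (by norm_num)
  simp only [smul_eq_mul, h₁, h₂] at hstrict
  have hNm : N ξm ^ 2 < 1 := by
    calc N ξm ^ 2 < 1/2 * 1^2 + 1/2 * 1^2 := hstrict
      _ = 1 := by norm_num
  have hNmlt : N ξm < 1 := by nlinarith [h.1 ξm]
  have hinner : ⟪x, ξm⟫ = M := by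
    rw [hξm, inner_add_right, real_inner_smul_right, real_inner_smul_right, hm₁, hm₂]
    ring
  have hmne : ξm ≠ 0 := by
    intro h0
    rw [h0, inner_zero_right] at hinner
    linarith
  have hNmpos : 0 < N ξm := mink_pos h hmne
  have hη : N ((N ξm)⁻¹ • ξm) = 1 := by
    rw [h.2.1, abs_of_pos (inv_pos.2 hNmpos), inv_mul_cancel₀ (ne_of_gt hNmpos)]
  have hle := hall _ hη
  rw [real_inner_smul_right, hinner] at hle
  have : 1 < (N ξm)⁻¹ := by
    rw [lt_inv_comm₀ one_pos hNmpos]; simpa using hNmlt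
  nlinarith

lemma dualNorm_hasGradientAt (hn : 1 ≤ n) (h : IsMinkowskiNorm N) {x : Euc n}
    (hx : x ≠ 0) : ∃ ξ, N ξ = 1 ∧ HasGradientAt (dualNorm N) ξ x := by
  choose xi hS hrep hall using dual_max hn h
  obtain ⟨R, hR, hRb, hRd⟩ := dualNorm_le hn h
  obtain ⟨hcpt, -⟩ := mink_S_compact hn h
  set ξx := xi x with hξx
  -- continuity of the maximizer selection at x
  have hcont : Filter.Tendsto xi (𝓝 x) (𝓝 ξx) := by
    rw [tendsto_nhds]
    intro U hU hξU
    set K := {ξ | N ξ = 1} \ U with hKdef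
    have hKcpt : IsCompact K := hcpt.diff hU
    rcases Set.eq_empty_or_nonempty K with hKe | hKne
    · filter_upwards with y
      have : xi y ∈ {ξ | N ξ = 1} := hS y
      by_contra hyU
      exact (Set.eq_empty_iff_forall_notMem.1 hKe (xi y)) ⟨this, hyU⟩
    · have hcontK : ContinuousOn (fun ξ : Euc n => ⟪x, ξ⟫) K :=
        (continuous_const.inner continuous_id).continuousOn
      obtain ⟨η₀, hη₀K, hη₀max⟩ := hKcpt.exists_isMaxOn hKne hcontK
      set M := dualNorm N x with hM
      set M' := ⟪x, η₀⟫ with hM'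
      have hM'lt : M' < M := by
        rcases lt_or_eq_of_le (hall x _ hη₀K.1) with hlt | heq
        · exact hlt
        · exfalso
          have : η₀ = ξx := dual_max_unique hn h hx hη₀K.1 (hS x) heq (hrep x)
          rw [this] at hη₀K
          exact hη₀K.2 hξU
      set δ := (M - M') / (3 * R) with hδ
      have hδpos : 0 < δ := by
        rw [hδ]
        have : 0 < M - M' := by linarith
        positivity
      rw [Metric.mem_nhds_iff]
      refine ⟨δ, hδpos, fun y hy => ?_⟩
      rw [Metric.mem_ball, dist_eq_norm] at hy
      simp only [Set.mem_preimage]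
      by_contra hyU
      have hyK : xi y ∈ K := ⟨hS y, hyU⟩
      have hup : ⟪y, xi y⟫ ≤ M' + δ * R := by
        have e1 : ⟪y, xi y⟫ = ⟪x, xi y⟫ + ⟪y - x, xi y⟫ := by
          rw [← inner_add_left]
          congr 1
          abel
        have e2 : ⟪x, xi y⟫ ≤ M' := hη₀max hyK
        have e3 : ⟪y - x, xi y⟫ ≤ δ * R := by
          calc ⟪y - x, xi y⟫ ≤ ‖y - x‖ * ‖xi y‖ := real_inner_le_norm _ _
            _ ≤ δ * R := by
                have := hRb _ (hS y)
                have hnn : (0:ℝ) ≤ ‖y - x‖ := norm_nonneg _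
                nlinarith
        linarith
      have hlow : M - δ * R ≤ ⟪y, xi y⟫ := by
        have e1 : ⟪y, ξx⟫ ≤ ⟪y, xi y⟫ := by
          rw [hrep y]
          exact hall y _ (hS x)
        have e2 : ⟪y, ξx⟫ = ⟪x, ξx⟫ + ⟪y - x, ξx⟫ := by
          rw [← inner_add_left]
          congr 1
          abel
        have e3 : -(δ * R) ≤ ⟪y - x, ξx⟫ := by
          have h1 : |⟪y - x, ξx⟫| ≤ ‖y - x‖ * ‖ξx‖ := abs_real_inner_le_norm _ _
          have h2 := hRb _ (hS x)
          have hnn : (0:ℝ) ≤ ‖y - x‖ := norm_nonneg _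
          have : ‖y - x‖ * ‖ξx‖ ≤ δ * R := by nlinarith
          have := neg_abs_le ⟪y - x, ξx⟫
          linarith
        have e4 : ⟪x, ξx⟫ = M := hrep x
        linarith
      have hcontr : M - M' ≤ 2 * (δ * R) := by linarith
      have hδR : δ * R = (M - M') / 3 := by
        rw [hδ]
        field_simp
      rw [hδR] at hcontr
      linarith
  -- differentiability
  refine ⟨ξx, hS x, ?_⟩
  rw [hasGradientAt_iff_isLittleO, Asymptotics.isLittleO_iff]
  intro c hc
  have hev : ∀ᶠ y in 𝓝 x, ‖xi y - ξx‖ < c := by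
    have : Filter.Tendsto (fun y => ‖xi y - ξx‖) (𝓝 x) (𝓝 0) := by
      have := hcont.sub (tendsto_const_nhds (x := ξx))
      simpa using this.norm
    exact this.eventually_lt_const hc
  filter_upwards [hev] with y hy
  set E := dualNorm N y - dualNorm N x - ⟪ξx, y - x⟫ with hE
  have hElow : 0 ≤ E := by
    have h1 : ⟪y, ξx⟫ ≤ dualNorm N y := hall y _ (hS x)
    have h2 : ⟪y, ξx⟫ = ⟪x, ξx⟫ + ⟪y - x, ξx⟫ := by
      rw [← inner_add_left]; congr 1; abel
    have h3 : ⟪x, ξx⟫ = dualNorm N x := hrep x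
    have h4 : ⟪y - x, ξx⟫ = ⟪ξx, y - x⟫ := real_inner_comm _ _
    rw [hE]
    linarith
  have hEup : E ≤ ‖y - x‖ * ‖xi y - ξx‖ := by
    have h1 : dualNorm N y = ⟪y, xi y⟫ := (hrep y).symm
    have h2 : ⟪x, xi y⟫ ≤ dualNorm N x := hall x _ (hS y)
    have h3 : ⟪y, xi y⟫ = ⟪x, xi y⟫ + ⟪y - x, xi y⟫ := by
      rw [← inner_add_left]; congr 1; abel
    have h4 : ⟪ξx, y - x⟫ = ⟪y - x, ξx⟫ := real_inner_comm _ _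
    have h5 : ⟪y - x, xi y⟫ - ⟪y - x, ξx⟫ = ⟪y - x, xi y - ξx⟫ := by
      rw [inner_sub_right]
    have h6 : ⟪y - x, xi y - ξx⟫ ≤ ‖y - x‖ * ‖xi y - ξx‖ := real_inner_le_norm _ _
    rw [hE]
    linarith
  have : ‖E‖ = E := by rw [Real.norm_eq_abs, abs_of_nonneg hElow]
  rw [this]
  calc E ≤ ‖y - x‖ * ‖xi y - ξx‖ := hEup
    _ ≤ c * ‖y - x‖ := by nlinarith [norm_nonneg (y - x), le_of_lt hy]

lemma dualNorm_rpow_hasFDerivAt_zero (hn : 1 ≤ n) (h : IsMinkowskiNorm N) {p : ℝ}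
    (hp : 1 < p) : HasGradientAt (fun z => dualNorm N z ^ p) (0 : Euc n) 0 := by
  obtain ⟨R, hR, -, hRd⟩ := dualNorm_le hn h
  rw [hasGradientAt_iff_isLittleO, Asymptotics.isLittleO_iff]
  intro c hc
  have hRp : (0:ℝ) < R ^ p := Real.rpow_pos_of_pos hR p
  set ε := (c / R ^ p) ^ (1/(p-1)) with hε
  have hεpos : 0 < ε := Real.rpow_pos_of_pos (by positivity) _
  have hεpow : ε ^ (p - 1) = c / R ^ p := by
    rw [hε, ← Real.rpow_mul (by positivity), one_div,
      inv_mul_cancel₀ (by linarith : p - 1 ≠ 0), Real.rpow_one]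
  rw [Metric.eventually_nhds_iff]
  refine ⟨ε, hεpos, fun z hz => ?_⟩
  rw [dist_zero_right] at hz
  have h0 : dualNorm N (0 : Euc n) ^ p = 0 := by
    rw [dualNorm_zero hn h, Real.zero_rpow (by linarith : p ≠ 0)]
  simp only [h0, inner_zero_left, sub_zero]
  have hd0 : 0 ≤ dualNorm N z := dualNorm_nonneg hn h z
  have hdp : dualNorm N z ^ p ≤ R ^ p * ‖z‖ ^ p := by
    rw [← Real.mul_rpow (le_of_lt hR) (norm_nonneg z)]
    exact Real.rpow_le_rpow hd0 (hRd z) (by linarith)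
  have hnp : ‖z‖ ^ p = ‖z‖ ^ (p - 1) * ‖z‖ := by
    rcases eq_or_ne z 0 with rfl | hz0
    · simp [Real.zero_rpow (by linarith : p ≠ 0),
        Real.zero_rpow (by linarith : p - 1 ≠ 0)]
    · nth_rewrite 1 [show p = (p - 1) + 1 by ring]
      rw [Real.rpow_add (norm_pos_iff.2 hz0), Real.rpow_one]
  have hmono : ‖z‖ ^ (p - 1) ≤ ε ^ (p - 1) :=
    Real.rpow_le_rpow (norm_nonneg z) (le_of_lt hz) (by linarith)
  have hnn : 0 ≤ dualNorm N z ^ p := Real.rpow_nonneg hd0 p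
  rw [show ‖dualNorm N z ^ p‖ = dualNorm N z ^ p from by
    rw [Real.norm_eq_abs, abs_of_nonneg hnn]]
  rw [show ‖z‖ = ‖z‖ from rfl]
  calc dualNorm N z ^ p ≤ R ^ p * (‖z‖ ^ (p-1) * ‖z‖) := by rw [← hnp]; exact hdp
    _ ≤ R ^ p * (ε ^ (p-1) * ‖z‖) := by
        have := norm_nonneg z
        nlinarith [mul_le_mul_of_nonneg_right hmono (norm_nonneg z)]
    _ = c * ‖z‖ := by rw [hεpow]; field_simp

lemma key_alg {α a b : ℝ} (hα : 0 < α) (ha : 0 < a) (hb : 0 ≤ b) :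
    (1 / (2*(α+1)) * (a ^ (2*(α+1)) + 4*(α+1)^2*b^2) ^ (1/(2*(α+1)) - 1)
        * (2*(α+1) * a ^ (2*(α+1) - 1))) ^ 2
      + a ^ (2*α) / 4 *
        (1 / (2*(α+1)) * (a ^ (2*(α+1)) + 4*(α+1)^2*b^2) ^ (1/(2*(α+1)) - 1)
          * (4*(α+1)^2 * (2*b))) ^ 2
    = (a / (a ^ (2*(α+1)) + 4*(α+1)^2*b^2) ^ (1/(2*(α+1)))) ^ (2*α) := by
  set β := α + 1 with hβ
  have hβpos : 0 < β := by rw [hβ]; linarith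
  set F := a ^ (2*β) + 4*β^2*b^2 with hF
  have haP : 0 < a ^ (2*β) := Real.rpow_pos_of_pos ha _
  have hFpos : 0 < F := by rw [hF]; nlinarith
  -- simplify the scalar coefficients
  have e1 : 1 / (2*β) * F ^ (1/(2*β) - 1) * (2*β * a ^ (2*β - 1))
      = F ^ (1/(2*β) - 1) * a ^ (2*β - 1) := by
    field_simp
  have e2 : 1 / (2*β) * F ^ (1/(2*β) - 1) * (4*β^2 * (2*b))
      = F ^ (1/(2*β) - 1) * (4*β*b) := by
    field_simp
  rw [e1, e2]
  have sq1 : (F ^ (1/(2*β) - 1) * a ^ (2*β - 1)) ^ 2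
      = F ^ (1/β - 2) * a ^ (2*(2*β - 1)) := by
    rw [mul_pow, ← Real.rpow_natCast (F ^ (1/(2*β) - 1)) 2,
      ← Real.rpow_natCast (a ^ (2*β - 1)) 2,
      ← Real.rpow_mul (le_of_lt hFpos), ← Real.rpow_mul (le_of_lt ha)]
    norm_num
    rw [show (β⁻¹ * (1/2) - 1) * 2 = β⁻¹ - 2 by ring,
      show (2*β - 1) * 2 = 2*(2*β - 1) by ring]
  have sq2 : (F ^ (1/(2*β) - 1) * (4*β*b)) ^ 2
      = F ^ (1/β - 2) * (16*β^2*b^2) := by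
    rw [mul_pow, ← Real.rpow_natCast (F ^ (1/(2*β) - 1)) 2,
      ← Real.rpow_mul (le_of_lt hFpos)]
    norm_num
    rw [show (β⁻¹ * (1/2) - 1) * 2 = β⁻¹ - 2 by ring]
    ring
  rw [sq1, sq2]
  have ha2 : a ^ (2*(2*β - 1)) = a ^ (2*α) * a ^ (2*β) := by
    rw [← Real.rpow_add ha]
    congr 1
    rw [hβ]; ring
  have hcollect : F ^ (1/β - 2) * a ^ (2*(2*β - 1))
      + a ^ (2*α) / 4 * (F ^ (1/β - 2) * (16*β^2*b^2))
      = a ^ (2*α) * (F ^ (1/β - 2) * F) := by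
    rw [ha2, hF]
    ring
  rw [hcollect]
  have hF1 : F ^ (1/β - 2) * F = F ^ (1/β - 1) := by
    nth_rewrite 2 [← Real.rpow_one F]
    rw [← Real.rpow_add hFpos]
    congr 1
    ring
  rw [hF1]
  -- right-hand side
  have hrho : 0 < F ^ (1/(2*β)) := Real.rpow_pos_of_pos hFpos _
  rw [Real.div_rpow (le_of_lt ha) (le_of_lt hrho),
    ← Real.rpow_mul (le_of_lt hFpos)]
  rw [show 1/(2*β) * (2*α) = -(1/β - 1) from by field_simp; ring]
  rw [Real.rpow_neg (le_of_lt hFpos)]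
  field_simp

lemma hasGradientAt_smul_toDual {f : Euc n → ℝ} {c : ℝ} {ξ x : Euc n}
    (h : HasFDerivAt f (c • ((InnerProductSpace.toDual ℝ (Euc n)) ξ)) x) :
    HasGradientAt f (c • ξ) x := by
  rw [hasGradientAt_iff_hasFDerivAt, map_smul]
  exact h

lemma hasGradientAt_zero_of_hasFDerivAt {f : Euc n → ℝ} {x : Euc n}
    (h : HasFDerivAt f (0 : Euc n →L[ℝ] ℝ) x) :
    HasGradientAt f 0 x := by
  rw [hasGradientAt_iff_hasFDerivAt, map_zero]
  exact h

end A

/-- Anisotropic eikonal equation: `Φ(∇_z ρ)² + (Φ⁰(z)^{2α}/4) Ψ(∇_σ ρ)² = (Φ⁰(z)/ρ)^{2α}`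
on `ℝ^N ∖ {0}`. -/
theorem anisotropic_eikonal (m k : ℕ) (hm : 1 ≤ m) (hk : 1 ≤ k) (α : ℝ) (hα : 0 < α)
    (Φ : Euc m → ℝ) (Ψ : Euc k → ℝ) (hΦ : IsMinkowskiNorm Φ) (hΨ : IsMinkowskiNorm Ψ) :
    ∀ x : Euc m × Euc k, x ≠ 0 →
      Φ (gradZ (rho α Φ Ψ) x) ^ 2 +
        dualNorm Φ x.1 ^ (2 * α) / 4 * Ψ (gradS (rho α Φ Ψ) x) ^ 2
      = (dualNorm Φ x.1 / rho α Φ Ψ x) ^ (2 * α) := by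
  intro x hx
  have h2β : (1:ℝ) < 2 * (α + 1) := by linarith
  have hgz : gradZ (rho α Φ Ψ) x
      = gradient (fun z => (dualNorm Φ z ^ (2*(α+1))
          + 4*(α+1)^2 * dualNorm Ψ x.2 ^ 2) ^ (1/(2*(α+1)))) x.1 := rfl
  have hgs : gradS (rho α Φ Ψ) x
      = gradient (fun σ => (dualNorm Φ x.1 ^ (2*(α+1))
          + 4*(α+1)^2 * dualNorm Ψ σ ^ 2) ^ (1/(2*(α+1)))) x.2 := rfl
  have hrx : rho α Φ Ψ x = (dualNorm Φ x.1 ^ (2*(α+1))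
      + 4*(α+1)^2 * dualNorm Ψ x.2 ^ 2) ^ (1/(2*(α+1))) := rfl
  by_cases h1 : x.1 = 0
  · -- z = 0, so σ ≠ 0
    have h2 : x.2 ≠ 0 := by
      intro h2
      exact hx (Prod.ext h1 h2)
    have hb : 0 < dualNorm Ψ x.2 := dualNorm_pos hk hΨ h2
    have ha0 : dualNorm Φ x.1 = 0 := by rw [h1]; exact dualNorm_zero hm hΦ
    have hC : 0 < 4*(α+1)^2 * dualNorm Ψ x.2 ^ 2 := by positivity
    have hinner : HasGradientAt (fun z : Euc m => dualNorm Φ z ^ (2*(α+1))) 0 0 :=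
      dualNorm_rpow_hasFDerivAt_zero hm hΦ h2β
    have hinner' : HasFDerivAt (fun z : Euc m => dualNorm Φ z ^ (2*(α+1))
        + 4*(α+1)^2 * dualNorm Ψ x.2 ^ 2) (0 : Euc m →L[ℝ] ℝ) 0 := by
      have := (hasGradientAt_iff_hasFDerivAt.1 hinner).add_const
        (4*(α+1)^2 * dualNorm Ψ x.2 ^ 2)
      simpa using this
    have houter : HasDerivAt (fun t : ℝ => t ^ (1/(2*(α+1))))
        (1/(2*(α+1)) * (4*(α+1)^2 * dualNorm Ψ x.2 ^ 2) ^ (1/(2*(α+1)) - 1))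
        (4*(α+1)^2 * dualNorm Ψ x.2 ^ 2) :=
      Real.hasDerivAt_rpow_const (Or.inl (ne_of_gt hC))
    have hval : (fun z : Euc m => dualNorm Φ z ^ (2*(α+1))
        + 4*(α+1)^2 * dualNorm Ψ x.2 ^ 2) 0 = 4*(α+1)^2 * dualNorm Ψ x.2 ^ 2 := by
      simp [dualNorm_zero hm hΦ, Real.zero_rpow (show 2*(α+1) ≠ 0 by positivity)]
    have hcomp : HasFDerivAt (fun z : Euc m => (dualNorm Φ z ^ (2*(α+1))
        + 4*(α+1)^2 * dualNorm Ψ x.2 ^ 2) ^ (1/(2*(α+1)))) (0 : Euc m →L[ℝ] ℝ) 0 := by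
      have := houter.comp_hasFDerivAt_of_eq (0 : Euc m) hinner' hval.symm
      simpa [Function.comp_def] using this
    have hgrad0 : gradient (fun z : Euc m => (dualNorm Φ z ^ (2*(α+1))
        + 4*(α+1)^2 * dualNorm Ψ x.2 ^ 2) ^ (1/(2*(α+1)))) 0 = 0 :=
      (hasGradientAt_zero_of_hasFDerivAt hcomp).gradient
    rw [hgz, h1, hgrad0, dualNorm_zero hm hΦ, mink_zero hΦ]
    simp [Real.zero_rpow (show 2*α ≠ 0 by positivity)]
  · -- z ≠ 0
    have ha : 0 < dualNorm Φ x.1 := dualNorm_pos hm hΦ h1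
    have hb : 0 ≤ dualNorm Ψ x.2 := dualNorm_nonneg hk hΨ x.2
    have haP : 0 < dualNorm Φ x.1 ^ (2*(α+1)) := Real.rpow_pos_of_pos ha _
    have hFpos : 0 < dualNorm Φ x.1 ^ (2*(α+1)) + 4*(α+1)^2 * dualNorm Ψ x.2 ^ 2 := by
      nlinarith
    -- gradZ
    obtain ⟨ξ, hξ1, hξg⟩ := dualNorm_hasGradientAt hm hΦ h1
    have h3 : HasFDerivAt (fun z : Euc m => dualNorm Φ z ^ (2*(α+1)))
        ((2*(α+1) * dualNorm Φ x.1 ^ (2*(α+1) - 1))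
          • ((InnerProductSpace.toDual ℝ (Euc m)) ξ)) x.1 := by
      have houtZ : HasDerivAt (fun t : ℝ => t ^ (2*(α+1)))
          (2*(α+1) * dualNorm Φ x.1 ^ (2*(α+1) - 1)) (dualNorm Φ x.1) :=
        Real.hasDerivAt_rpow_const (Or.inl (ne_of_gt ha))
      have := houtZ.comp_hasFDerivAt x.1 (hasGradientAt_iff_hasFDerivAt.1 hξg)
      simpa [Function.comp_def] using this
    have h4 := h3.add_const (4*(α+1)^2 * dualNorm Ψ x.2 ^ 2)
    have h5 : HasDerivAt (fun t : ℝ => t ^ (1/(2*(α+1))))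
        (1/(2*(α+1)) * (dualNorm Φ x.1 ^ (2*(α+1))
          + 4*(α+1)^2 * dualNorm Ψ x.2 ^ 2) ^ (1/(2*(α+1)) - 1))
        (dualNorm Φ x.1 ^ (2*(α+1)) + 4*(α+1)^2 * dualNorm Ψ x.2 ^ 2) :=
      Real.hasDerivAt_rpow_const (Or.inl (ne_of_gt hFpos))
    have hcompZ : HasFDerivAt (fun z : Euc m => (dualNorm Φ z ^ (2*(α+1))
        + 4*(α+1)^2 * dualNorm Ψ x.2 ^ 2) ^ (1/(2*(α+1))))
        ((1/(2*(α+1)) * (dualNorm Φ x.1 ^ (2*(α+1))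
            + 4*(α+1)^2 * dualNorm Ψ x.2 ^ 2) ^ (1/(2*(α+1)) - 1)
          * (2*(α+1) * dualNorm Φ x.1 ^ (2*(α+1) - 1)))
          • ((InnerProductSpace.toDual ℝ (Euc m)) ξ)) x.1 := by
      have := h5.comp_hasFDerivAt x.1 h4
      simpa [Function.comp_def, smul_smul] using this
    have hgradZval : gradZ (rho α Φ Ψ) x
        = (1/(2*(α+1)) * (dualNorm Φ x.1 ^ (2*(α+1))
            + 4*(α+1)^2 * dualNorm Ψ x.2 ^ 2) ^ (1/(2*(α+1)) - 1)
          * (2*(α+1) * dualNorm Φ x.1 ^ (2*(α+1) - 1))) • ξ := by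
      rw [hgz]
      exact (hasGradientAt_smul_toDual hcompZ).gradient
    have hsZpos : 0 < 1/(2*(α+1)) * (dualNorm Φ x.1 ^ (2*(α+1))
        + 4*(α+1)^2 * dualNorm Ψ x.2 ^ 2) ^ (1/(2*(α+1)) - 1)
        * (2*(α+1) * dualNorm Φ x.1 ^ (2*(α+1) - 1)) := by
      have e1 : (0:ℝ) < (dualNorm Φ x.1 ^ (2*(α+1))
          + 4*(α+1)^2 * dualNorm Ψ x.2 ^ 2) ^ (1/(2*(α+1)) - 1) :=
        Real.rpow_pos_of_pos hFpos _
      have e2 : (0:ℝ) < dualNorm Φ x.1 ^ (2*(α+1) - 1) := Real.rpow_pos_of_pos ha _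
      positivity
    have hΦgradZ : Φ (gradZ (rho α Φ Ψ) x)
        = 1/(2*(α+1)) * (dualNorm Φ x.1 ^ (2*(α+1))
            + 4*(α+1)^2 * dualNorm Ψ x.2 ^ 2) ^ (1/(2*(α+1)) - 1)
          * (2*(α+1) * dualNorm Φ x.1 ^ (2*(α+1) - 1)) := by
      rw [hgradZval, hΦ.2.1, hξ1, abs_of_pos hsZpos, mul_one]
    -- gradS
    have hΨgradS : Ψ (gradS (rho α Φ Ψ) x)
        = 1/(2*(α+1)) * (dualNorm Φ x.1 ^ (2*(α+1))
            + 4*(α+1)^2 * dualNorm Ψ x.2 ^ 2) ^ (1/(2*(α+1)) - 1)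
          * (4*(α+1)^2 * (2 * dualNorm Ψ x.2)) := by
      by_cases h2 : x.2 = 0
      · have hb0 : dualNorm Ψ x.2 = 0 := by rw [h2]; exact dualNorm_zero hk hΨ
        have hCpos : 0 < dualNorm Φ x.1 ^ (2*(α+1)) + 4*(α+1)^2 * dualNorm Ψ x.2 ^ 2 :=
          hFpos
        have hsq : HasGradientAt (fun σ : Euc k => dualNorm Ψ σ ^ 2) (0 : Euc k) 0 := by
          have := dualNorm_rpow_hasFDerivAt_zero hk hΨ (show (1:ℝ) < 2 by norm_num)
          have hfe : (fun σ : Euc k => dualNorm Ψ σ ^ (2:ℝ))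
              = fun σ : Euc k => dualNorm Ψ σ ^ 2 := by
            funext σ
            rw [show ((2:ℝ)) = ((2:ℕ):ℝ) by norm_num, Real.rpow_natCast]
          rwa [hfe] at this
        have hinner2 : HasFDerivAt (fun σ : Euc k => dualNorm Φ x.1 ^ (2*(α+1))
            + 4*(α+1)^2 * dualNorm Ψ σ ^ 2) (0 : Euc k →L[ℝ] ℝ) 0 := by
          have hc := (hasGradientAt_iff_hasFDerivAt.1 hsq).const_mul (4*(α+1)^2)
          have := hc.const_add (dualNorm Φ x.1 ^ (2*(α+1)))
          simpa using this
        have hout2 : HasDerivAt (fun t : ℝ => t ^ (1/(2*(α+1))))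
            (1/(2*(α+1)) * (dualNorm Φ x.1 ^ (2*(α+1))
              + 4*(α+1)^2 * dualNorm Ψ x.2 ^ 2) ^ (1/(2*(α+1)) - 1))
            (dualNorm Φ x.1 ^ (2*(α+1)) + 4*(α+1)^2 * dualNorm Ψ x.2 ^ 2) :=
          Real.hasDerivAt_rpow_const (Or.inl (ne_of_gt hCpos))
        have hval2 : (fun σ : Euc k => dualNorm Φ x.1 ^ (2*(α+1))
            + 4*(α+1)^2 * dualNorm Ψ σ ^ 2) 0
            = dualNorm Φ x.1 ^ (2*(α+1)) + 4*(α+1)^2 * dualNorm Ψ x.2 ^ 2 := by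
          simp [dualNorm_zero hk hΨ, hb0]
        have hcomp2 : HasFDerivAt (fun σ : Euc k => (dualNorm Φ x.1 ^ (2*(α+1))
            + 4*(α+1)^2 * dualNorm Ψ σ ^ 2) ^ (1/(2*(α+1)))) (0 : Euc k →L[ℝ] ℝ) 0 := by
          have := hout2.comp_hasFDerivAt_of_eq (0 : Euc k) hinner2 hval2.symm
          simpa [Function.comp_def] using this
        have hgrad0 : gradS (rho α Φ Ψ) x = 0 := by
          rw [hgs, h2]
          exact (hasGradientAt_zero_of_hasFDerivAt hcomp2).gradient
        rw [hgrad0, mink_zero hΨ, hb0]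
        ring
      · -- σ ≠ 0
        have hbpos : 0 < dualNorm Ψ x.2 := dualNorm_pos hk hΨ h2
        obtain ⟨η, hη1, hηg⟩ := dualNorm_hasGradientAt hk hΨ h2
        have hsq : HasFDerivAt (fun σ : Euc k => dualNorm Ψ σ ^ 2)
            ((2 * dualNorm Ψ x.2) • ((InnerProductSpace.toDual ℝ (Euc k)) η)) x.2 := by
          have hout : HasDerivAt (fun t : ℝ => t ^ 2) (2 * dualNorm Ψ x.2)
              (dualNorm Ψ x.2) := by
            simpa using (hasDerivAt_pow 2 (dualNorm Ψ x.2))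
          have := hout.comp_hasFDerivAt x.2 (hasGradientAt_iff_hasFDerivAt.1 hηg)
          simpa [Function.comp_def] using this
        have hinner2 : HasFDerivAt (fun σ : Euc k => dualNorm Φ x.1 ^ (2*(α+1))
            + 4*(α+1)^2 * dualNorm Ψ σ ^ 2)
            ((4*(α+1)^2 * (2 * dualNorm Ψ x.2))
              • ((InnerProductSpace.toDual ℝ (Euc k)) η)) x.2 := by
          have hc := hsq.const_mul (4*(α+1)^2)
          have := hc.const_add (dualNorm Φ x.1 ^ (2*(α+1)))
          simpa [smul_smul, mul_assoc] using this
        have hout2 : HasDerivAt (fun t : ℝ => t ^ (1/(2*(α+1))))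
            (1/(2*(α+1)) * (dualNorm Φ x.1 ^ (2*(α+1))
              + 4*(α+1)^2 * dualNorm Ψ x.2 ^ 2) ^ (1/(2*(α+1)) - 1))
            (dualNorm Φ x.1 ^ (2*(α+1)) + 4*(α+1)^2 * dualNorm Ψ x.2 ^ 2) :=
          Real.hasDerivAt_rpow_const (Or.inl (ne_of_gt hFpos))
        have hcomp2 : HasFDerivAt (fun σ : Euc k => (dualNorm Φ x.1 ^ (2*(α+1))
            + 4*(α+1)^2 * dualNorm Ψ σ ^ 2) ^ (1/(2*(α+1))))
            ((1/(2*(α+1)) * (dualNorm Φ x.1 ^ (2*(α+1))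
                + 4*(α+1)^2 * dualNorm Ψ x.2 ^ 2) ^ (1/(2*(α+1)) - 1)
              * (4*(α+1)^2 * (2 * dualNorm Ψ x.2)))
              • ((InnerProductSpace.toDual ℝ (Euc k)) η)) x.2 := by
          have := hout2.comp_hasFDerivAt x.2 hinner2
          simpa [Function.comp_def, smul_smul] using this
        have hgradSval : gradS (rho α Φ Ψ) x
            = (1/(2*(α+1)) * (dualNorm Φ x.1 ^ (2*(α+1))
                + 4*(α+1)^2 * dualNorm Ψ x.2 ^ 2) ^ (1/(2*(α+1)) - 1)
              * (4*(α+1)^2 * (2 * dualNorm Ψ x.2))) • η := by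
          rw [hgs]
          exact (hasGradientAt_smul_toDual hcomp2).gradient
        have hsSnn : 0 ≤ 1/(2*(α+1)) * (dualNorm Φ x.1 ^ (2*(α+1))
            + 4*(α+1)^2 * dualNorm Ψ x.2 ^ 2) ^ (1/(2*(α+1)) - 1)
            * (4*(α+1)^2 * (2 * dualNorm Ψ x.2)) := by
          have e1 : (0:ℝ) < (dualNorm Φ x.1 ^ (2*(α+1))
              + 4*(α+1)^2 * dualNorm Ψ x.2 ^ 2) ^ (1/(2*(α+1)) - 1) :=
            Real.rpow_pos_of_pos hFpos _
          positivity
        rw [hgradSval, hΨ.2.1, hη1, abs_of_nonneg hsSnn, mul_one]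
    -- final algebra
    rw [hΦgradZ, hΨgradS, hrx]
    have := key_alg hα ha hb (α := α) (a := dualNorm Φ x.1) (b := dualNorm Ψ x.2)
    convert this using 2 <;> ring
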